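/- Let (y_{t,k}^{par}) be defined by y_{t,k}^{par} = Σ_{i=0}^{k-1} ξ_{t,i}(φ₀(t-i) + ε_{t-i}). If Σ_{i=0}^{∞} ξ_{t,i}φ₀(t-i) converges and Σ_{i=0}^{∞} sup_t(ξ_{t,i}²σ_{t-i}²) < ∞, then y_{t,k}^{par} converges in L² as k → ∞, and the limit y_t = Σ_{i=0}^{∞} ξ_{t,i}(φ₀(t-i) + ε_{t-i}) satisfies the equation y_t = φ₀(t) + φ₁(t)y_{t-1} + φ₂(t)y_{t-2} + ε_t almost surely. -/

import Mathlib

set_option synthInstance.maxHeartbeats 1000000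
set_option maxHeartbeats 1000000
open scoped RealInnerProductSpace


open MeasureTheory Filter Finset

/-- Under Assumption A.1 (convergence of `Σ ξ_{t,i}φ₀(t-i)` and summability of
`sup_t ξ_{t,i}²σ_{t-i}²`), the partial sums
`y_{t,k}^{par} = Σ_{i<k} ξ_{t,i}(φ₀(t-i) + ε_{t-i})` converge in `L²` as
`k → ∞`, and the limit satisfies the time-varying AR(2) equation a.s. -/
theorem wold_representation_tvar2
    {Ω : Type*} {m : MeasurableSpace Ω} {μ : Measure Ω} [IsProbabilityMeasure μ]
    (ε : ℤ → Ω → ℝ) (φ₀ φ₁ φ₂ : ℤ → ℝ) (σ2 : ℤ → ℝ) (ξ : ℤ → ℤ → ℝ)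
    (hξ0 : ∀ t, ξ t 0 = 1) (hξm1 : ∀ t, ξ t (-1) = 0)
    (hξrec : ∀ t i : ℤ, 1 ≤ i →
      ξ t i = φ₁ t * ξ (t - 1) (i - 1) + φ₂ t * ξ (t - 2) (i - 2))
    (hεL2 : ∀ τ, MemLp (ε τ) 2 μ)
    (hεmean : ∀ τ, ∫ ω, ε τ ω ∂μ = 0)
    (hεuncorr : ∀ s τ : ℤ, s ≠ τ → ∫ ω, ε s ω * ε τ ω ∂μ = 0)
    (hσ : ∀ τ, σ2 τ = ∫ ω, (ε τ ω) ^ 2 ∂μ)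
    (hσbdd : ∃ Ml M : ℝ, 0 < Ml ∧ ∀ τ, Ml ≤ σ2 τ ∧ σ2 τ ≤ M)
    (hdrift : ∀ t : ℤ, ∃ S : ℝ,
      Tendsto (fun k : ℕ => ∑ i ∈ Finset.range k, ξ t i * φ₀ (t - (i : ℤ)))
        atTop (nhds S))
    (hdom : ∃ g : ℕ → ℝ, Summable g ∧
      ∀ (t : ℤ) (i : ℕ), (ξ t i) ^ 2 * σ2 (t - (i : ℤ)) ≤ g i) :
    ∃ y : ℤ → Ω → ℝ,
      (∀ t, MemLp (y t) 2 μ) ∧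
      (∀ t, Tendsto
        (fun k : ℕ => eLpNorm
          (y t - fun ω => ∑ i ∈ Finset.range k,
            ξ t i * (φ₀ (t - (i : ℤ)) + ε (t - (i : ℤ)) ω)) 2 μ)
        atTop (nhds 0)) ∧
      (∀ t, ∀ᵐ ω ∂μ,
        y t ω = φ₀ t + φ₁ t * y (t - 1) ω + φ₂ t * y (t - 2) ω + ε t ω) := by
  classical
  obtain ⟨g, hgsum, hgdom⟩ := hdom
  obtain ⟨Ml, M, hMl, hbdd⟩ := hσbdd
  -- basic objects
  set e : ℤ → Lp ℝ 2 μ := fun τ => (hεL2 τ).toLp (ε τ) with he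
  set Cst : ℝ → Lp ℝ 2 μ := fun c => (memLp_const (μ := μ) (p := 2) c).toLp _ with hCst
  set A : ℤ → ℕ → ℝ := fun t k => ∑ i ∈ Finset.range k, ξ t i * φ₀ (t - (i : ℤ)) with hA
  set E : ℤ → ℕ → Lp ℝ 2 μ :=
    fun t k => ∑ i ∈ Finset.range k, (ξ t i) • e (t - (i : ℤ)) with hE
  set F : ℤ → ℕ → Lp ℝ 2 μ := fun t k => Cst (A t k) + E t k with hF
  set S : ℤ → ℕ → Ω → ℝ := fun t k ω =>
    ∑ i ∈ Finset.range k, ξ t i * (φ₀ (t - (i : ℤ)) + ε (t - (i : ℤ)) ω) with hSdef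
  -- norm of constants
  have hCst_norm : ∀ c : ℝ, ‖Cst c‖ = |c| := by
    intro c
    rw [hCst, Lp.norm_toLp, eLpNorm_const c (by norm_num) (IsProbabilityMeasure.ne_zero μ)]
    simp [Real.norm_eq_abs]
  have hCst_iso : Isometry Cst := by
    apply Isometry.of_dist_eq
    intro a b
    have : Cst a - Cst b = Cst (a - b) := by
      rw [hCst]
      simp only []
      rw [← MemLp.toLp_sub]
      exact MemLp.toLp_congr _ _ (by rfl)
    rw [dist_eq_norm, this, hCst_norm, Real.dist_eq]
  -- inner products
  have hinner : ∀ s τ : ℤ, ⟪e s, e τ⟫ = ∫ ω, ε s ω * ε τ ω ∂μ := by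
    intro s τ
    rw [L2.inner_def]
    apply integral_congr_ae
    filter_upwards [(hεL2 s).coeFn_toLp, (hεL2 τ).coeFn_toLp] with ω h1 h2
    simp [he, h1, h2, RCLike.inner_apply]; ring
  have hinner_self : ∀ τ, ⟪e τ, e τ⟫ = σ2 τ := by
    intro τ
    rw [hinner, hσ τ]
    congr 1; funext ω; ring
  have hinner_ne : ∀ s τ : ℤ, s ≠ τ → ⟪e s, e τ⟫ = 0 := fun s τ h => by
    rw [hinner]; exact hεuncorr s τ h
  -- norm of stochastic combinations
  have hnorm_sq : ∀ (t : ℤ) (s : Finset ℕ) (c : ℕ → ℝ),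
      ‖∑ i ∈ s, c i • e (t - (i : ℤ))‖ ^ 2 = ∑ i ∈ s, c i ^ 2 * σ2 (t - (i : ℤ)) := by
    intro t s c
    rw [← real_inner_self_eq_norm_sq, sum_inner]
    apply Finset.sum_congr rfl
    intro i hi
    rw [inner_sum]
    rw [Finset.sum_eq_single i]
    · rw [real_inner_smul_left, real_inner_smul_right, hinner_self]; ring
    · intro j hj hji
      rw [real_inner_smul_left, real_inner_smul_right,
        hinner_ne _ _ (by intro h; apply hji; omega)]
      ring
    · intro h; exact absurd hi h
  -- nonnegativity of g
  have hg0 : ∀ i, 0 ≤ g i := by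
    intro i
    refine le_trans ?_ (hgdom 0 i)
    exact mul_nonneg (sq_nonneg _) (le_trans hMl.le (hbdd (0 - (i : ℤ))).1)
  -- tail bound
  have htail : ∀ (t : ℤ) (n m N : ℕ), N ≤ n → n ≤ m →
      dist (E t n) (E t m) ≤ Real.sqrt (∑' j, g (N + j)) := by
    intro t n m N hNn hnm
    have hsub : Finset.range n ⊆ Finset.range m := Finset.range_subset_range.2 hnm
    have hdiff : E t m - E t n = ∑ i ∈ Finset.range m \ Finset.range n,
        (ξ t i) • e (t - (i : ℤ)) := by
      rw [hE]; simp only []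
      rw [Finset.sum_sdiff_eq_sub hsub]
    have hns : ‖E t m - E t n‖ ^ 2 =
        ∑ i ∈ Finset.range m \ Finset.range n, (ξ t i) ^ 2 * σ2 (t - (i : ℤ)) := by
      rw [hdiff, hnorm_sq]
    have hle : ∑ i ∈ Finset.range m \ Finset.range n, (ξ t i) ^ 2 * σ2 (t - (i : ℤ))
        ≤ ∑' j, g (N + j) := by
      calc ∑ i ∈ Finset.range m \ Finset.range n, (ξ t i) ^ 2 * σ2 (t - (i : ℤ))
          ≤ ∑ i ∈ Finset.range m \ Finset.range n, g i :=
            Finset.sum_le_sum fun i _ => hgdom t i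
        _ = ∑ j ∈ (Finset.range m \ Finset.range n).image (· - N), g (N + j) := by
            rw [Finset.sum_image]
            · apply Finset.sum_congr rfl
              intro i hi
              simp only [Finset.mem_sdiff, Finset.mem_range] at hi
              congr 1; omega
            · intro a ha b hb hab
              simp only [Finset.mem_coe, Finset.mem_sdiff, Finset.mem_range] at ha hb hab
              omega
        _ ≤ ∑' j, g (N + j) := by
            apply Summable.sum_le_tsum _ (fun i _ => hg0 _)
            exact ((summable_nat_add_iff N).2 hgsum).congr (fun j => by rw [add_comm])
    rw [dist_eq_norm, norm_sub_rev]
    rw [show ‖E t m - E t n‖ = Real.sqrt (‖E t m - E t n‖ ^ 2) by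
      rw [Real.sqrt_sq (norm_nonneg _)]]
    apply Real.sqrt_le_sqrt
    rw [hns]; exact hle
  have htail0 : Tendsto (fun N => Real.sqrt (∑' j, g (N + j))) atTop (nhds 0) := by
    have h1 : Tendsto (fun N => ∑' j, g (N + j)) atTop (nhds 0) := by
      have := tendsto_sum_nat_add g
      convert this using 2 with N
      apply tsum_congr; intro j; rw [add_comm]
    have := (Real.continuous_sqrt.tendsto 0).comp h1
    simpa [Function.comp_def] using this
  -- Cauchy sequences
  have hEcauchy : ∀ t, CauchySeq (E t) := by
    intro t
    apply cauchySeq_of_le_tendsto_0 (fun N => Real.sqrt (∑' j, g (N + j))) _ htail0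
    intro n k N hn hk
    rcases le_total n k with h | h
    · exact htail t n k N hn h
    · rw [dist_comm]; exact htail t k n N hk h
  have hFlim : ∀ t, ∃ Y : Lp ℝ 2 μ, Tendsto (F t) atTop (nhds Y) := by
    intro t
    apply cauchySeq_tendsto_of_complete
    apply CauchySeq.add _ (hEcauchy t)
    obtain ⟨L, hL⟩ := hdrift t
    exact ((hL.cauchySeq).map hCst_iso.uniformContinuous)
  choose Y hY using hFlim
  -- coeFn of F
  have hEcoe : ∀ t k, (E t k : Ω → ℝ) =ᵐ[μ]
      fun ω => ∑ i ∈ Finset.range k, ξ t i * ε (t - (i : ℤ)) ω := by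
    intro t k
    rw [hE]; simp only []
    induction k with
    | zero =>
      filter_upwards [Lp.coeFn_zero (E := ℝ) (p := 2) (μ := μ)] with ω h
      simpa using h
    | succ k ih =>
      rw [Finset.sum_range_succ]
      filter_upwards [ih, Lp.coeFn_add (∑ i ∈ Finset.range k, (ξ t i) • e (t - (i : ℤ)))
        ((ξ t k) • e (t - (k : ℤ))), Lp.coeFn_smul (ξ t k) (e (t - (k : ℤ))),
        (hεL2 (t - (k : ℤ))).coeFn_toLp] with ω h1 h2 h3 h4
      rw [h2]
      simp only [Pi.add_apply, Finset.sum_range_succ, h1, h3, Pi.smul_apply, smul_eq_mul]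
      rw [show ((e (t - (k : ℤ)) : Lp ℝ 2 μ) : Ω → ℝ) ω = ε (t - (k : ℤ)) ω from h4]
  have hFcoe : ∀ t k, (F t k : Ω → ℝ) =ᵐ[μ] S t k := by
    intro t k
    rw [hF]; simp only []
    filter_upwards [Lp.coeFn_add (Cst (A t k)) (E t k), hEcoe t k,
      (memLp_const (μ := μ) (p := 2) (A t k)).coeFn_toLp] with ω h1 h2 h3
    rw [h1]
    simp only [Pi.add_apply, h2]
    rw [hCst]; simp only []
    rw [h3, hSdef]
    simp only [hA]
    rw [← Finset.sum_add_distrib]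
    apply Finset.sum_congr rfl
    intro i _; ring
  -- set y
  refine ⟨fun t => (Y t : Ω → ℝ), fun t => Lp.memLp _, ?_, ?_⟩
  · -- L² convergence
    intro t
    have h1 : ∀ k, eLpNorm ((Y t : Ω → ℝ) - S t k) 2 μ = ENNReal.ofReal ‖Y t - F t k‖ := by
      intro k
      have hcongr : ((Y t - F t k : Lp ℝ 2 μ) : Ω → ℝ) =ᵐ[μ] (Y t : Ω → ℝ) - S t k := by
        filter_upwards [Lp.coeFn_sub (Y t) (F t k), hFcoe t k] with ω ha hb
        rw [ha]; simp [hb]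
      rw [← eLpNorm_congr_ae hcongr, Lp.norm_def,
        ENNReal.ofReal_toReal (Lp.eLpNorm_ne_top _)]
    have h2 : Tendsto (fun k => ‖Y t - F t k‖) atTop (nhds 0) := by
      have := (hY t).sub_const (Y t)
      have h3 : Tendsto (fun k => dist (F t k) (Y t)) atTop (nhds 0) :=
        tendsto_iff_dist_tendsto_zero.1 (hY t)
      convert h3 using 2 with k
      rw [dist_eq_norm, norm_sub_rev]
    have := (ENNReal.continuous_ofReal.tendsto 0).comp h2
    simp only [ENNReal.ofReal_zero] at this
    convert this using 2 with k
    exact h1 k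
  · -- recursion
    intro t
    have hrecS : ∀ k ω, S t (k + 2) ω =
        φ₀ t + ε t ω + φ₁ t * S (t - 1) (k + 1) ω + φ₂ t * S (t - 2) k ω := by
      intro k ω
      rw [hSdef]; simp only []
      rw [Finset.sum_range_succ' _ (k + 1)]
      have h0 : ξ t (0 : ℕ) * (φ₀ (t - ((0:ℕ) : ℤ)) + ε (t - ((0:ℕ) : ℤ)) ω)
          = φ₀ t + ε t ω := by
        norm_num [hξ0]
      rw [h0]
      have hsplit : ∀ i : ℕ, ξ t ((i : ℤ) + 1) * (φ₀ (t - ((i : ℤ) + 1)) + ε (t - ((i : ℤ) + 1)) ω)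
          = φ₁ t * (ξ (t - 1) i * (φ₀ ((t - 1) - i) + ε ((t - 1) - i) ω))
            + φ₂ t * (ξ (t - 2) ((i : ℤ) - 1) * (φ₀ (t - ((i : ℤ) + 1)) + ε (t - ((i : ℤ) + 1)) ω)) := by
        intro i
        rw [hξrec t ((i : ℤ) + 1) (by omega)]
        have e1 : (i : ℤ) + 1 - 1 = i := by ring
        have e2 : (i : ℤ) + 1 - 2 = (i : ℤ) - 1 := by ring
        have e3 : t - ((i : ℤ) + 1) = (t - 1) - i := by ring
        rw [e1, e2, e3]
        ring
      have hcast : ∀ i : ℕ, ((i + 1 : ℕ) : ℤ) = (i : ℤ) + 1 := by intro i; push_cast; ring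
      calc (∑ i ∈ Finset.range (k + 1),
              ξ t ((i + 1 : ℕ) : ℤ) * (φ₀ (t - ((i + 1 : ℕ) : ℤ)) + ε (t - ((i + 1 : ℕ) : ℤ)) ω))
            + (φ₀ t + ε t ω)
          = (∑ i ∈ Finset.range (k + 1),
              (φ₁ t * (ξ (t - 1) i * (φ₀ ((t - 1) - i) + ε ((t - 1) - i) ω))
            + φ₂ t * (ξ (t - 2) ((i : ℤ) - 1) * (φ₀ (t - ((i : ℤ) + 1)) + ε (t - ((i : ℤ) + 1)) ω))))
            + (φ₀ t + ε t ω) := by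
            congr 1
            apply Finset.sum_congr rfl
            intro i _
            rw [hcast i, hsplit i]
        _ = φ₀ t + ε t ω + φ₁ t * S (t - 1) (k + 1) ω + φ₂ t * S (t - 2) k ω := by
            rw [Finset.sum_add_distrib, ← Finset.mul_sum, ← Finset.mul_sum]
            rw [hSdef]; simp only []
            have hlast : ∑ i ∈ Finset.range (k + 1),
                ξ (t - 2) ((i : ℤ) - 1) * (φ₀ (t - ((i : ℤ) + 1)) + ε (t - ((i : ℤ) + 1)) ω)
                = ∑ i ∈ Finset.range k,
                ξ (t - 2) i * (φ₀ ((t - 2) - i) + ε ((t - 2) - i) ω) := by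
              rw [Finset.sum_range_succ' _ k]
              have hz : ξ (t - 2) (((0:ℕ) : ℤ) - 1) * (φ₀ (t - (((0:ℕ) : ℤ) + 1)) + ε (t - (((0:ℕ) : ℤ) + 1)) ω) = 0 := by
                norm_num
                left
                exact hξm1 _
              rw [hz, add_zero]
              apply Finset.sum_congr rfl
              intro i _
              have e1 : ((i + 1 : ℕ) : ℤ) - 1 = i := by push_cast; ring
              have e2 : t - (((i + 1 : ℕ) : ℤ) + 1) = (t - 2) - i := by push_cast; ring
              rw [e1, e2]
            rw [hlast]
            ring
    -- Lp identity
    have hFrec : ∀ k, F t (k + 2) =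
        Cst (φ₀ t) + e t + φ₁ t • F (t - 1) (k + 1) + φ₂ t • F (t - 2) k := by
      intro k
      apply Lp.ext
      filter_upwards [hFcoe t (k + 2), hFcoe (t - 1) (k + 1), hFcoe (t - 2) k,
        Lp.coeFn_add (Cst (φ₀ t) + e t + φ₁ t • F (t - 1) (k + 1)) (φ₂ t • F (t - 2) k),
        Lp.coeFn_add (Cst (φ₀ t) + e t) (φ₁ t • F (t - 1) (k + 1)),
        Lp.coeFn_add (Cst (φ₀ t)) (e t),
        Lp.coeFn_smul (φ₁ t) (F (t - 1) (k + 1)),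
        Lp.coeFn_smul (φ₂ t) (F (t - 2) k),
        (memLp_const (μ := μ) (p := 2) (φ₀ t)).coeFn_toLp,
        (hεL2 t).coeFn_toLp] with ω h1 h2 h3 h4 h5 h6 h7 h8 h9 h10
      rw [h1, hrecS k ω, h4]
      simp only [Pi.add_apply, h5, h6, h7, h8, Pi.smul_apply, smul_eq_mul, h2, h3]
      rw [hCst]; simp only []
      rw [h9]
      rw [he]; simp only []
      rw [h10]
    -- pass to the limit
    have hlim1 : Tendsto (fun k => F t (k + 2)) atTop (nhds (Y t)) :=
      (hY t).comp (tendsto_add_atTop_nat 2)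
    have hlim2 : Tendsto (fun k => Cst (φ₀ t) + e t + φ₁ t • F (t - 1) (k + 1) + φ₂ t • F (t - 2) k)
        atTop (nhds (Cst (φ₀ t) + e t + φ₁ t • Y (t - 1) + φ₂ t • Y (t - 2))) := by
      refine Tendsto.add (Tendsto.add tendsto_const_nhds ?_) ?_
      · exact ((hY (t - 1)).comp (tendsto_add_atTop_nat 1)).const_smul _
      · exact (hY (t - 2)).const_smul _
    have hYeq : Y t = Cst (φ₀ t) + e t + φ₁ t • Y (t - 1) + φ₂ t • Y (t - 2) := by
      apply tendsto_nhds_unique hlim1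
      have : (fun k => F t (k + 2)) = fun k =>
          Cst (φ₀ t) + e t + φ₁ t • F (t - 1) (k + 1) + φ₂ t • F (t - 2) k := by
        funext k; exact hFrec k
      rw [this]; exact hlim2
    -- translate to a.e. statement
    have := hYeq
    filter_upwards [Lp.coeFn_add (Cst (φ₀ t) + e t + φ₁ t • Y (t - 1)) (φ₂ t • Y (t - 2)),
      Lp.coeFn_add (Cst (φ₀ t) + e t) (φ₁ t • Y (t - 1)),
      Lp.coeFn_add (Cst (φ₀ t)) (e t),
      Lp.coeFn_smul (φ₁ t) (Y (t - 1)),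
      Lp.coeFn_smul (φ₂ t) (Y (t - 2)),
      (memLp_const (μ := μ) (p := 2) (φ₀ t)).coeFn_toLp,
      (hεL2 t).coeFn_toLp] with ω h1 h2 h3 h4 h5 h6 h7
    conv_lhs => rw [hYeq]
    rw [h1]
    simp only [Pi.add_apply, h2, h3, h4, h5, Pi.smul_apply, smul_eq_mul]
    rw [hCst]; simp only []
    rw [h6]
    rw [he]; simp only []
    rw [h7]
    ring
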